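/- Let n₁, n₂ be positive integers, Q_α = 2 n_α + 2, and 0 < p ≤ ∞ with p finite. There exists a constant C > 0 depending only on p, Q₁, Q₂ such that: if u : 𝒰 = ℝ₊² × ℋ_{n₁} × ℋ_{n₂} → ℂ is a C² function satisfying the heat equations (∂/∂t_α + Δ_α) u = 0 for α = 1,2, and its non-tangential maximal function u* belongs to L^p(ℋ_{n₁} × ℋ_{n₂}), then |u(t₁,t₂,g₁,g₂)| ≤ C ‖u*‖_{L^p} t₁^{−Q₁/(2p)} t₂^{−Q₂/(2p)} for every (t₁,t₂,g₁,g₂) ∈ 𝒰. -/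

import Mathlib

open MeasureTheory
open scoped ENNReal NNReal

noncomputable section

/-- A point of the Heisenberg group ℋ_n : `(s, z) ∈ ℝ × ℂⁿ`. -/
abbrev Heis (n : ℕ) := ℝ × (Fin n → ℂ)

/-- The Heisenberg group law. -/
def hmul {n : ℕ} (g g' : Heis n) : Heis n :=
  (g.1 + g'.1 + 2 * (∑ j, (g.2 j * (starRingEnd ℂ) (g'.2 j)).im), g.2 + g'.2)

/-- The Heisenberg group inverse. -/
def hinv {n : ℕ} (g : Heis n) : Heis n := (-g.1, -g.2)

/-- The homogeneous norm `‖(s,z)‖ = (|z|⁴ + s²)^{1/4}`. -/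
def hnorm {n : ℕ} (g : Heis n) : ℝ :=
  ((∑ j, Complex.normSq (g.2 j)) ^ 2 + g.1 ^ 2) ^ (1/4 : ℝ)

/-- the constant -/
def heisC (n : ℕ) : ℝ := Real.sqrt 2 * (Real.pi / (Real.sqrt 2 * n)) ^ n

lemma heisC_pos {n : ℕ} (hn : 0 < n) : 0 < heisC n := by
  have h2 : (0:ℝ) < Real.sqrt 2 := Real.sqrt_pos.2 (by norm_num)
  have hn' : (0:ℝ) < n := by exact_mod_cast hn
  exact mul_pos h2 (pow_pos (div_pos Real.pi_pos (mul_pos h2 hn')) n)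

lemma continuous_hnorm {n : ℕ} : Continuous (hnorm (n := n)) := by
  apply Continuous.rpow_const
  · exact (((continuous_finset_sum _ fun j _ =>
      Complex.continuous_normSq.comp ((continuous_apply j).comp continuous_snd)).pow 2).add
      (continuous_fst.pow 2))
  · exact fun x => Or.inr (by norm_num)

lemma measurableSet_T {n : ℕ} (t : ℝ) :
    MeasurableSet {h : Heis n | hnorm h ^ 2 < t} :=
  (isOpen_lt (continuous_hnorm.pow 2) continuous_const).measurableSet

lemma measurePreserving_hmul_hinv (n : ℕ) (a : Heis n) :
    MeasurePreserving (fun g : Heis n => hmul (hinv a) g) volume volume := by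
  haveI : Measure.IsAddLeftInvariant (volume : Measure (Heis n)) :=
    inferInstanceAs (Measure.IsAddLeftInvariant
      ((volume : Measure ℝ).prod (volume : Measure (Fin n → ℂ))))
  set L : (Fin n → ℂ) → ℝ := fun z => 2 * ∑ j, (-a.2 j * (starRingEnd ℂ) (z j)).im with hLdef
  have hLc : Continuous L := by
    apply continuous_const.mul
    exact continuous_finset_sum _ fun j _ =>
      Complex.continuous_im.comp (continuous_const.mul
        (Complex.continuous_conj.comp (continuous_apply j)))
  have h1 : MeasurePreserving (fun p : (Fin n → ℂ) × ℝ => (p.1, p.2 + L p.1))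
      ((volume : Measure (Fin n → ℂ)).prod (volume : Measure ℝ))
      ((volume : Measure (Fin n → ℂ)).prod (volume : Measure ℝ)) :=
    MeasurePreserving.skew_product (g := fun z s => s + L z) (MeasurePreserving.id _)
      (by exact measurable_snd.add (hLc.measurable.comp measurable_fst))
      (Filter.Eventually.of_forall fun z => map_add_right_eq_self volume (L z))
  have hA : MeasurePreserving (fun g : Heis n => (g.1 + L g.2, g.2)) volume volume := by
    have h3 := (Measure.measurePreserving_swap.comp h1).comp
      (Measure.measurePreserving_swap (μ := (volume : Measure ℝ)) (ν := (volume : Measure (Fin n → ℂ))))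
    exact h3
  have htr : MeasurePreserving (fun x : Heis n => hinv a + x) volume volume :=
    measurePreserving_add_left volume (hinv a)
  have heq : (fun g : Heis n => hmul (hinv a) g)
      = (fun x : Heis n => hinv a + x) ∘ (fun g : Heis n => (g.1 + L g.2, g.2)) := by
    funext g
    refine Prod.ext ?_ rfl
    show -a.1 + g.1 + 2 * (∑ j, (-a.2 j * (starRingEnd ℂ) (g.2 j)).im)
      = -a.1 + (g.1 + L g.2)
    rw [hLdef]; ring
  rw [heq]
  exact htr.comp hA

lemma vol_T_ge (n : ℕ) (hn : 0 < n) (t : ℝ) (ht : 0 < t) :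
    ENNReal.ofReal (heisC n * t ^ (n+1)) ≤ volume {h : Heis n | hnorm h ^ 2 < t} := by
  have h2 : (0:ℝ) < Real.sqrt 2 := Real.sqrt_pos.2 (by norm_num)
  have hs2 : Real.sqrt 2 ^ 2 = 2 := Real.sq_sqrt (by norm_num)
  have hn' : (0:ℝ) < n := by exact_mod_cast hn
  set R : ℝ := Real.sqrt (t / (Real.sqrt 2 * n)) with hRdef
  have hRarg : 0 < t / (Real.sqrt 2 * n) := div_pos ht (mul_pos h2 hn')
  have hRpos : 0 < R := Real.sqrt_pos.2 hRarg
  have hR2 : R ^ 2 = t / (Real.sqrt 2 * n) := Real.sq_sqrt hRarg.le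
  set B : Set (Heis n) := Set.Ioo (-(t/Real.sqrt 2)) (t/Real.sqrt 2) ×ˢ
      Set.pi Set.univ (fun _ : Fin n => Metric.ball (0:ℂ) R) with hBdef
  have hsub : B ⊆ {h : Heis n | hnorm h ^ 2 < t} := by
    rintro h ⟨hs, hz⟩
    have hsumnn : 0 ≤ ∑ j, Complex.normSq (h.2 j) :=
      Finset.sum_nonneg fun j _ => Complex.normSq_nonneg _
    have hsum : ∑ j, Complex.normSq (h.2 j) < t / Real.sqrt 2 := by
      have hterm : ∀ j ∈ Finset.univ, Complex.normSq (h.2 j) < R ^ 2 := by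
        intro j _
        have hj := hz j (Set.mem_univ j)
        rw [Metric.mem_ball, dist_zero_right] at hj
        have hns : Complex.normSq (h.2 j) = ‖h.2 j‖ ^ 2 := by
          rw [Complex.normSq_eq_norm_sq]
        rw [hns]
        exact pow_lt_pow_left₀ hj (norm_nonneg _) (by norm_num)
      calc ∑ j, Complex.normSq (h.2 j) < ∑ _j : Fin n, R ^ 2 :=
            Finset.sum_lt_sum_of_nonempty (Finset.univ_nonempty_iff.2
              (Fin.pos_iff_nonempty.mp hn)) hterm
        _ = n * R ^ 2 := by simp [Finset.sum_const, nsmul_eq_mul]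
        _ = t / Real.sqrt 2 := by rw [hR2]; field_simp
    have hX : (∑ j, Complex.normSq (h.2 j)) ^ 2 + h.1 ^ 2 < t ^ 2 := by
      have htd : 0 < t / Real.sqrt 2 := div_pos ht h2
      have h1' : (∑ j, Complex.normSq (h.2 j)) ^ 2 < (t / Real.sqrt 2) ^ 2 :=
        sq_lt_sq' (by linarith) hsum
      have h2' : h.1 ^ 2 < (t / Real.sqrt 2) ^ 2 := sq_lt_sq' hs.1 hs.2
      have h3' : (t / Real.sqrt 2) ^ 2 + (t / Real.sqrt 2) ^ 2 = t ^ 2 := by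
        rw [div_pow, hs2]; ring
      linarith
    have hXnn : 0 ≤ (∑ j, Complex.normSq (h.2 j)) ^ 2 + h.1 ^ 2 := by positivity
    show hnorm h ^ 2 < t
    have hrw : hnorm h ^ 2 = ((∑ j, Complex.normSq (h.2 j)) ^ 2 + h.1 ^ 2) ^ (2⁻¹ : ℝ) := by
      rw [hnorm, ← Real.rpow_natCast (_ ^ (1/4 : ℝ)) 2, ← Real.rpow_mul hXnn]
      norm_num
    rw [hrw]
    calc ((∑ j, Complex.normSq (h.2 j)) ^ 2 + h.1 ^ 2) ^ (2⁻¹ : ℝ)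
        < (t ^ 2) ^ (2⁻¹ : ℝ) := Real.rpow_lt_rpow hXnn hX (by norm_num)
      _ = t := by
          rw [← Real.rpow_natCast t 2, ← Real.rpow_mul ht.le]
          norm_num
  have hBvol : volume B = ENNReal.ofReal (heisC n * t ^ (n+1)) := by
    rw [hBdef, Measure.volume_eq_prod, Measure.prod_prod, Real.volume_Ioo, volume_pi_pi]
    simp only [Complex.volume_ball]
    rw [Finset.prod_const, Finset.card_univ, Fintype.card_fin]
    have hpi : ((NNReal.pi : ℝ≥0∞)) = ENNReal.ofReal Real.pi := by
      rw [← NNReal.coe_real_pi, ENNReal.ofReal_coe_nnreal]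
    have p2 : (0:ℝ) ≤ t / Real.sqrt 2 - -(t / Real.sqrt 2) := by
      have := (div_pos ht h2).le; linarith
    rw [hpi, ← ENNReal.ofReal_pow hRpos.le,
      ← ENNReal.ofReal_mul (sq_nonneg R),
      ← ENNReal.ofReal_pow (by positivity : (0:ℝ) ≤ R ^ 2 * Real.pi),
      ← ENNReal.ofReal_mul p2]
    congr 1
    have e1 : t / Real.sqrt 2 - -(t / Real.sqrt 2) = Real.sqrt 2 * t := by
      field_simp
      nlinarith [hs2]
    have e2 : R ^ 2 * Real.pi = (Real.pi / (Real.sqrt 2 * n)) * t := by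
      rw [hR2]; field_simp
    rw [e1, e2, mul_pow, heisC]
    ring
  calc ENNReal.ofReal (heisC n * t ^ (n+1)) = volume B := hBvol.symm
    _ ≤ volume {h : Heis n | hnorm h ^ 2 < t} := measure_mono hsub

lemma vol_S_ge (n : ℕ) (hn : 0 < n) (a : Heis n) (t : ℝ) (ht : 0 < t) :
    ENNReal.ofReal (heisC n * t ^ (n+1))
      ≤ volume {g : Heis n | hnorm (hmul (hinv a) g) ^ 2 < t} := by
  have := (measurePreserving_hmul_hinv n a).measure_preimage
    (measurableSet_T (n := n) t).nullMeasurableSet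
  calc ENNReal.ofReal (heisC n * t ^ (n+1)) ≤ volume {h : Heis n | hnorm h ^ 2 < t} :=
        vol_T_ge n hn t ht
    _ = volume {g : Heis n | hnorm (hmul (hinv a) g) ^ 2 < t} := this.symm

/-- The flat-model ambient space `(t₁, t₂, g₁, g₂)`. -/
abbrev FlatPt (n₁ n₂ : ℕ) := ℝ × ℝ × Heis n₁ × Heis n₂

/-- The left-invariant vector field `X_j = ∂/∂x_j + 2 x_{n+j} ∂/∂s`. -/
def XD {n : ℕ} (j : Fin n) (f : Heis n → ℂ) (g : Heis n) : ℂ :=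
  fderiv ℝ f g (2 * (g.2 j).im, Pi.single j 1)

/-- The left-invariant vector field `X_{n+j} = ∂/∂x_{n+j} − 2 x_j ∂/∂s`. -/
def YD {n : ℕ} (j : Fin n) (f : Heis n → ℂ) (g : Heis n) : ℂ :=
  fderiv ℝ f g (-2 * (g.2 j).re, Pi.single j Complex.I)

/-- The sub-Laplacian `Δ = −(1/(4n)) ∑_{j=1}^{2n} X_j²`. -/
def subLaplacian (n : ℕ) (f : Heis n → ℂ) (g : Heis n) : ℂ :=
  -(1 / (4 * (n : ℂ))) * ∑ j : Fin n, (XD j (XD j f) g + YD j (YD j f) g)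

/-- `u` satisfies the heat equations `(∂/∂t_α + Δ_α) u = 0`, `α = 1,2`, at `p`. -/
def SatisfiesHeatEquationsAt (n₁ n₂ : ℕ) (u : FlatPt n₁ n₂ → ℂ) (p : FlatPt n₁ n₂) : Prop :=
  fderiv ℝ u p (1, 0, 0, 0)
      + subLaplacian n₁ (fun g => u (p.1, p.2.1, g, p.2.2.2)) p.2.2.1 = 0 ∧
  fderiv ℝ u p (0, 1, 0, 0)
      + subLaplacian n₂ (fun g => u (p.1, p.2.1, p.2.2.1, g)) p.2.2.2 = 0

/-- The non-tangential maximal function `u*(g) = sup_{(t,h) ∈ Γ_g} |u(t,h)|`,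
as an `ℝ≥0∞`-valued supremum, where
`Γ_g = {(t,h) : ‖h_α⁻¹·g_α‖² < t_α, α = 1,2}`. -/
def ntMax (n₁ n₂ : ℕ) (u : FlatPt n₁ n₂ → ℂ) (g : Heis n₁ × Heis n₂) : ENNReal :=
  ⨆ (x : FlatPt n₁ n₂) (_ : hnorm (hmul (hinv x.2.2.1) g.1) ^ 2 < x.1 ∧
      hnorm (hmul (hinv x.2.2.2) g.2) ^ 2 < x.2.1), ENNReal.ofReal ‖u x‖

/-- Pointwise bound `|u(t₁,t₂,g)| ≤ C ‖u*‖_{L^p} t₁^{−Q₁/(2p)} t₂^{−Q₂/(2p)}`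
for solutions of the bi-parameter heat equations whose non-tangential maximal
function lies in `L^p`. -/
theorem heat_solution_pointwise_bound (n₁ n₂ : ℕ) (hn₁ : 0 < n₁) (hn₂ : 0 < n₂)
    (p : ℝ) (hp : 0 < p) :
    ∃ C : ℝ, 0 < C ∧ ∀ u : FlatPt n₁ n₂ → ℂ,
      ContDiffOn ℝ 2 u {q : FlatPt n₁ n₂ | 0 < q.1 ∧ 0 < q.2.1} →
      (∀ q : FlatPt n₁ n₂, 0 < q.1 → 0 < q.2.1 → SatisfiesHeatEquationsAt n₁ n₂ u q) →
      (∫⁻ g : Heis n₁ × Heis n₂, (ntMax n₁ n₂ u g) ^ p) < ⊤ →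
      ∀ q : FlatPt n₁ n₂, 0 < q.1 → 0 < q.2.1 →
        ENNReal.ofReal ‖u q‖ ≤
          ENNReal.ofReal (C * q.1 ^ (-(2 * (n₁ : ℝ) + 2) / (2 * p))
              * q.2.1 ^ (-(2 * (n₂ : ℝ) + 2) / (2 * p)))
            * (∫⁻ g : Heis n₁ × Heis n₂, (ntMax n₁ n₂ u g) ^ p) ^ (1 / p) := by
  have hc1 := heisC_pos hn₁
  have hc2 := heisC_pos hn₂
  have hp' : p ≠ 0 := hp.ne'
  refine ⟨(heisC n₁ * heisC n₂) ^ (-(1/p)),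
    Real.rpow_pos_of_pos (mul_pos hc1 hc2) _, ?_⟩
  intro u _ _ hIlt q ht₁ ht₂
  set I := ∫⁻ g : Heis n₁ × Heis n₂, (ntMax n₁ n₂ u g) ^ p with hIdef
  set S₁ : Set (Heis n₁) := {g | hnorm (hmul (hinv q.2.2.1) g) ^ 2 < q.1} with hS1def
  set S₂ : Set (Heis n₂) := {g | hnorm (hmul (hinv q.2.2.2) g) ^ 2 < q.2.1} with hS2def
  have hS₁ : MeasurableSet S₁ :=
    (measurePreserving_hmul_hinv n₁ q.2.2.1).measurable (measurableSet_T q.1)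
  have hS₂ : MeasurableSet S₂ :=
    (measurePreserving_hmul_hinv n₂ q.2.2.2).measurable (measurableSet_T q.2.1)
  have hG : MeasurableSet (S₁ ×ˢ S₂) := hS₁.prod hS₂
  have key : ∀ g ∈ S₁ ×ˢ S₂, ENNReal.ofReal ‖u q‖ ≤ ntMax n₁ n₂ u g := by
    rintro g ⟨hg1, hg2⟩
    exact le_iSup_of_le q (le_iSup_of_le ⟨hg1, hg2⟩ le_rfl)
  have step : ENNReal.ofReal ‖u q‖ ^ p * volume (S₁ ×ˢ S₂) ≤ I := by
    have heq : ENNReal.ofReal ‖u q‖ ^ p * volume (S₁ ×ˢ S₂)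
        = ∫⁻ g, (S₁ ×ˢ S₂).indicator (fun _ => ENNReal.ofReal ‖u q‖ ^ p) g := by
      rw [lintegral_indicator hG, setLIntegral_const]
    rw [heq, hIdef]
    refine lintegral_mono fun g => ?_
    by_cases hg : g ∈ S₁ ×ˢ S₂
    · rw [Set.indicator_of_mem hg]
      exact ENNReal.rpow_le_rpow (key g hg) hp.le
    · rw [Set.indicator_of_notMem hg]
      exact zero_le
  set m : ℝ := (heisC n₁ * q.1 ^ (n₁+1)) * (heisC n₂ * q.2.1 ^ (n₂+1)) with hm
  have hmpos : 0 < m := by positivity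
  have hvol : ENNReal.ofReal m ≤ volume (S₁ ×ˢ S₂) := by
    rw [hm, Measure.volume_eq_prod, Measure.prod_prod,
      ENNReal.ofReal_mul (by positivity)]
    exact mul_le_mul' (vol_S_ge n₁ hn₁ _ _ ht₁) (vol_S_ge n₂ hn₂ _ _ ht₂)
  have h5 : ENNReal.ofReal ‖u q‖ ^ p * ENNReal.ofReal m ≤ I :=
    le_trans (mul_le_mul_right hvol _) step
  have h6 : ENNReal.ofReal ‖u q‖ ^ p ≤ I / ENNReal.ofReal m :=
    (ENNReal.le_div_iff_mul_le (Or.inl (ENNReal.ofReal_pos.2 hmpos).ne')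
      (Or.inl ENNReal.ofReal_ne_top)).2 h5
  have h7 : ENNReal.ofReal ‖u q‖ ≤ (I / ENNReal.ofReal m) ^ (1/p) := by
    have h := ENNReal.rpow_le_rpow h6 (by positivity : (0:ℝ) ≤ 1/p)
    rwa [← ENNReal.rpow_mul, mul_one_div, div_self hp', ENNReal.rpow_one] at h
  have hmr : (m ^ (1/p))⁻¹
      = (heisC n₁ * heisC n₂) ^ (-(1/p)) * q.1 ^ (-(2*(n₁:ℝ)+2)/(2*p))
        * q.2.1 ^ (-(2*(n₂:ℝ)+2)/(2*p)) := by
    have hq1 : (0:ℝ) < q.1 := ht₁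
    have hq2 : (0:ℝ) < q.2.1 := ht₂
    have ee₁ : -(2*(n₁:ℝ)+2)/(2*p) = -((((n₁+1:ℕ)):ℝ) * (1/p)) := by
      push_cast; field_simp
    have ee₂ : -(2*(n₂:ℝ)+2)/(2*p) = -((((n₂+1:ℕ)):ℝ) * (1/p)) := by
      push_cast; field_simp
    rw [ee₁, ee₂, hm,
      show (heisC n₁ * q.1^(n₁+1)) * (heisC n₂ * q.2.1^(n₂+1))
        = (heisC n₁ * heisC n₂) * (q.1^(n₁+1) * q.2.1^(n₂+1)) by ring,
      Real.mul_rpow (by positivity) (by positivity),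
      Real.mul_rpow (by positivity) (by positivity), mul_inv, mul_inv,
      ← Real.rpow_natCast q.1 (n₁+1), ← Real.rpow_natCast q.2.1 (n₂+1),
      Real.mul_rpow (by positivity) (by positivity), mul_inv,
      ← Real.rpow_mul hq1.le, ← Real.rpow_mul hq2.le,
      ← Real.rpow_neg hq1.le, ← Real.rpow_neg hq2.le,
      Real.rpow_neg (by positivity : (0:ℝ) ≤ heisC n₁ * heisC n₂),
      Real.mul_rpow hc1.le hc2.le, mul_inv]
    ring
  have hdiv : (I / ENNReal.ofReal m) ^ (1/p)
      = ENNReal.ofReal ((m ^ (1/p))⁻¹) * I ^ (1/p) := by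
    rw [ENNReal.div_rpow_of_nonneg _ _ (by positivity : (0:ℝ) ≤ 1/p),
      ENNReal.ofReal_rpow_of_pos hmpos, div_eq_mul_inv,
      ← ENNReal.ofReal_inv_of_pos (Real.rpow_pos_of_pos hmpos _), mul_comm]
  calc ENNReal.ofReal ‖u q‖ ≤ (I / ENNReal.ofReal m) ^ (1/p) := h7
    _ = ENNReal.ofReal ((m ^ (1/p))⁻¹) * I ^ (1/p) := hdiv
    _ = ENNReal.ofReal ((heisC n₁ * heisC n₂) ^ (-(1/p))
          * q.1 ^ (-(2*(n₁:ℝ)+2)/(2*p)) * q.2.1 ^ (-(2*(n₂:ℝ)+2)/(2*p)))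
        * I ^ (1/p) := by rw [hmr]
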